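/- Let x be k-sparse, 0 < κ < 1, and suppose ‖Aᵀw‖_∞ ≤ κλσ where y = Ax + w. If x̂ minimizes (1/2)‖y − Az‖₂² + λσ‖z‖₁, then ‖x̂ − x‖_q ≤ ((1+κ)/(1−κ)) · 2 k^{1−1/q} λσ / ρ²(A) and ‖x̂ − x‖₁ ≤ ((1+κ)/(1−κ)²) · 4 k^{2−2/q} λσ / ρ²(A), where ρ(A) = ρ_{q, (2/(1−κ))^{q/(q−1)} k}(A) > 0. -/

import Mathlib

open Finset Matrix

noncomputable def l1 {N : ℕ} (z : Fin N → ℝ) : ℝ := ∑ i, |z i|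
noncomputable def lq {N : ℕ} (q : ℝ) (z : Fin N → ℝ) : ℝ := (∑ i, |z i| ^ q) ^ (1/q)
noncomputable def l2 {m : ℕ} (v : Fin m → ℝ) : ℝ := Real.sqrt (∑ i, (v i)^2)
noncomputable def linf {N : ℕ} (z : Fin N → ℝ) : ℝ := ⨆ i, |z i|
open scoped Classical in
noncomputable def l0 {N : ℕ} (z : Fin N → ℝ) : ℕ := (Finset.univ.filter (fun i => z i ≠ 0)).card
noncomputable def sparsityQ {N : ℕ} (q : ℝ) (z : Fin N → ℝ) : ℝ := (l1 z / lq q z) ^ (q/(q-1))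
noncomputable def cmsv {m N : ℕ} (q s : ℝ) (A : Matrix (Fin m) (Fin N) ℝ) : ℝ :=
  sInf { r | ∃ z : Fin N → ℝ, z ≠ 0 ∧ sparsityQ q z ≤ s ∧ r = l2 (A.mulVec z) / lq q z }

lemma lq_nonneg {N : ℕ} (q : ℝ) (z : Fin N → ℝ) : 0 ≤ lq q z :=
  Real.rpow_nonneg (Finset.sum_nonneg fun _ _ => Real.rpow_nonneg (abs_nonneg _) q) _

lemma lq_pos {N : ℕ} {q : ℝ} (hq0 : 0 < q) {z : Fin N → ℝ} (hz : z ≠ 0) : 0 < lq q z := by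
  obtain ⟨i, hi⟩ := Function.ne_iff.mp hz
  have h1 : (0:ℝ) < |z i| ^ q := Real.rpow_pos_of_pos (abs_pos.mpr hi) q
  have h2 : (0:ℝ) < ∑ j, |z j| ^ q :=
    lt_of_lt_of_le h1 (Finset.single_le_sum (fun j _ => Real.rpow_nonneg (abs_nonneg _) q)
      (Finset.mem_univ i))
  exact Real.rpow_pos_of_pos h2 _

set_option maxHeartbeats 4000000 in
theorem stmt14 {m N k : ℕ} (A : Matrix (Fin m) (Fin N) ℝ)
    (x xh : Fin N → ℝ) (w y : Fin m → ℝ) (lam κ : ℝ)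
    (hlam : 0 < lam) (hκ0 : 0 < κ) (hκ1 : κ < 1)
    (hy : y = A.mulVec x + w) (hw : linf (A.transpose.mulVec w) ≤ κ * lam)
    (hx : l0 x ≤ k) (q : ℝ) (hq : 1 < q)
    (hmin : ∀ z : Fin N → ℝ,
      (1/2) * (l2 (y - A.mulVec xh))^2 + lam * l1 xh ≤
        (1/2) * (l2 (y - A.mulVec z))^2 + lam * l1 z)
    (hρ : 0 < cmsv q ((2/(1-κ)) ^ (q/(q-1)) * (k : ℝ)) A) :
    lq q (xh - x) ≤ (1+κ)/(1-κ) * (2 * (k : ℝ) ^ (1 - 1/q) * lam) /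
        (cmsv q ((2/(1-κ)) ^ (q/(q-1)) * (k : ℝ)) A) ^ 2 ∧
      l1 (xh - x) ≤ (1+κ)/(1-κ)^2 * (4 * (k : ℝ) ^ (2 - 2/q) * lam) /
        (cmsv q ((2/(1-κ)) ^ (q/(q-1)) * (k : ℝ)) A) ^ 2 := by
  classical
  have hq0 : (0:ℝ) < q := lt_trans one_pos hq
  have hq1 : (0:ℝ) < q - 1 := by linarith
  have hκ1' : (0:ℝ) < 1 - κ := by linarith
  have he : (0:ℝ) < 1 - 1/q := by
    rw [sub_pos, div_lt_one hq0]; exact hq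
  obtain ⟨ρ, hρd⟩ : ∃ r, cmsv q ((2/(1-κ)) ^ (q/(q-1)) * (k : ℝ)) A = r := ⟨_, rfl⟩
  rw [hρd] at hρ ⊢
  obtain ⟨ke, hked⟩ : ∃ r, ((k:ℝ) ^ (1 - 1/q)) = r := ⟨_, rfl⟩
  have hke : (0:ℝ) ≤ ke := hked ▸ Real.rpow_nonneg (Nat.cast_nonneg k) _
  rw [hked]
  have hk2e : (k:ℝ) ^ (2 - 2/q) = ke * ke := by
    have h2q : (2 - 2/q) = (1 - 1/q) + (1 - 1/q) := by ring
    rw [h2q, Real.rpow_add' (Nat.cast_nonneg k) (ne_of_gt (by linarith)), hked]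
  rw [hk2e]
  set h : Fin N → ℝ := xh - x with hhdef
  have hρ2 : (0:ℝ) < ρ ^ 2 := pow_pos hρ 2
  by_cases hzero : h = 0
  · have hlq0 : lq q h = 0 := by
      rw [hzero]
      simp [lq, Real.zero_rpow (ne_of_gt hq0), Real.zero_rpow (inv_ne_zero (ne_of_gt hq0)),
        Real.zero_rpow (one_div_ne_zero (ne_of_gt hq0))]
    have hl10 : l1 h = 0 := by rw [hzero]; simp [l1]
    constructor
    · rw [hlq0]; positivity
    · rw [hl10]; positivity
  -- main case : h ≠ 0
  obtain ⟨L, hLd⟩ : ∃ r, lq q h = r := ⟨_, rfl⟩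
  have hL : 0 < L := hLd ▸ lq_pos hq0 hzero
  rw [hLd]
  set T : Finset (Fin N) := Finset.univ.filter (fun i => x i ≠ 0) with hTdef
  obtain ⟨a, had⟩ : ∃ r, (∑ i ∈ T, |h i|) = r := ⟨_, rfl⟩
  obtain ⟨b, hbd⟩ : ∃ r, (∑ i ∈ Tᶜ, |h i|) = r := ⟨_, rfl⟩
  have ha0 : 0 ≤ a := had ▸ Finset.sum_nonneg fun i _ => abs_nonneg _
  have hb0 : 0 ≤ b := hbd ▸ Finset.sum_nonneg fun i _ => abs_nonneg _
  have hab : l1 h = a + b := by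
    rw [l1, ← had, ← hbd, Finset.sum_add_sum_compl]
  obtain ⟨S, hSd⟩ : ∃ r, (∑ i, (A.mulVec h i)^2) = r := ⟨_, rfl⟩
  have hS0 : 0 ≤ S := hSd ▸ Finset.sum_nonneg fun i _ => sq_nonneg _
  -- Step 1: optimality inequality
  have key1 : (1/2) * S ≤ lam * ((1+κ)*a - (1-κ)*b) := by
    have hopt := hmin x
    have hyx : y - A.mulVec x = w := by rw [hy]; abel
    have hyxh : y - A.mulVec xh = w - A.mulVec h := by
      rw [hy, hhdef, Matrix.mulVec_sub]; abel
    have hl2a : (l2 (y - A.mulVec x))^2 = ∑ i, (w i)^2 := by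
      rw [hyx, l2, Real.sq_sqrt (Finset.sum_nonneg fun i _ => sq_nonneg _)]
    have hl2b : (l2 (y - A.mulVec xh))^2 = ∑ i, (w i - A.mulVec h i)^2 := by
      rw [hyxh, l2, Real.sq_sqrt (Finset.sum_nonneg fun i _ => sq_nonneg _)]
      simp [Pi.sub_apply]
    obtain ⟨ip, hipd⟩ : ∃ r, (∑ i, w i * A.mulVec h i) = r := ⟨_, rfl⟩
    have hexp : ∑ i, (w i - A.mulVec h i)^2 = ∑ i, (w i)^2 - 2*ip + S := by
      rw [← hipd, ← hSd, Finset.mul_sum, ← Finset.sum_sub_distrib, ← Finset.sum_add_distrib]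
      exact Finset.sum_congr rfl fun i _ => by ring
    -- ip in terms of transpose
    have hip2 : ip = ∑ j, (A.transpose.mulVec w) j * h j := by
      rw [← hipd]
      have h1 : (∑ i, w i * A.mulVec h i) = w ⬝ᵥ (A.mulVec h) := by
        simp [dotProduct]
      have h2 : (∑ j, (A.transpose.mulVec w) j * h j) = (A.transpose.mulVec w) ⬝ᵥ h := by
        simp [dotProduct]
      rw [h1, h2, Matrix.dotProduct_mulVec, Matrix.mulVec_transpose]
    have hipbound : ip ≤ κ * lam * (a + b) := by
      rw [hip2, ← hab, l1]
      calc ∑ j, (A.transpose.mulVec w) j * h j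
          ≤ ∑ j, κ * lam * |h j| := by
            refine Finset.sum_le_sum fun j _ => ?_
            have h1 : (A.transpose.mulVec w) j * h j ≤ |(A.transpose.mulVec w) j| * |h j| := by
              calc (A.transpose.mulVec w) j * h j ≤ |(A.transpose.mulVec w) j * h j| :=
                    le_abs_self _
                _ = |(A.transpose.mulVec w) j| * |h j| := abs_mul _ _
            have h2 : |(A.transpose.mulVec w) j| ≤ κ * lam := by
              unfold linf at hw
              refine le_trans ?_ hw
              exact le_ciSup (f := fun j => |(A.transpose.mulVec w) j|) (Set.Finite.bddAbove (Set.finite_range _)) j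
            exact le_trans h1 (mul_le_mul_of_nonneg_right h2 (abs_nonneg _))
        _ = κ * lam * ∑ j, |h j| := by rw [Finset.mul_sum]
    have hl1bound : l1 x - l1 xh ≤ a - b := by
      have hx1 : l1 x = ∑ i ∈ T, |x i| := by
        rw [l1, ← Finset.sum_add_sum_compl T]
        have hz : ∑ i ∈ Tᶜ, |x i| = 0 := by
          refine Finset.sum_eq_zero fun i hi => ?_
          have : x i = 0 := by
            by_contra hne
            exact (Finset.mem_compl.mp hi) (Finset.mem_filter.mpr ⟨Finset.mem_univ i, hne⟩)
          simp [this]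
        rw [hz, add_zero]
      have hxh1 : l1 xh = ∑ i ∈ T, |xh i| + b := by
        rw [l1, ← Finset.sum_add_sum_compl T, ← hbd]
        congr 1
        refine Finset.sum_congr rfl fun i hi => ?_
        have hxi : x i = 0 := by
          by_contra hne
          exact (Finset.mem_compl.mp hi) (Finset.mem_filter.mpr ⟨Finset.mem_univ i, hne⟩)
        have hhi : h i = xh i := by simp [hhdef, hxi]
        rw [hhi]
      rw [hx1, hxh1, ← had]
      have hside : ∑ i ∈ T, |x i| - ∑ i ∈ T, |xh i| ≤ ∑ i ∈ T, |h i| := by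
        rw [← Finset.sum_sub_distrib]
        refine Finset.sum_le_sum fun i _ => ?_
        have h1 : |x i| - |xh i| ≤ |x i - xh i| := abs_sub_abs_le_abs_sub _ _
        have h2 : |x i - xh i| = |h i| := by
          rw [hhdef]; simp [abs_sub_comm]
        linarith
      linarith
    rw [hl2a, hl2b, hexp] at hopt
    nlinarith [hopt, hipbound, hl1bound]
  -- Step 2: Hölder
  have key2 : a ≤ ke * L := by
    have hconj : (q/(q-1)).HolderConjugate q :=
      (Real.HolderConjugate.conjExponent hq).symm
    have hholder := Real.inner_le_Lp_mul_Lq_of_nonneg (s := T)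
      (f := fun _ => (1:ℝ)) (g := fun i => |h i|) hconj
      (fun i _ => zero_le_one) (fun i _ => abs_nonneg _)
    simp only [one_mul, Real.one_rpow] at hholder
    have hcard : (∑ _i ∈ T, (1:ℝ)) = (T.card : ℝ) := by simp
    rw [hcard] at hholder
    have hinv : 1 / (q/(q-1)) = 1 - 1/q := by field_simp
    have hTk : (T.card : ℝ) ≤ (k : ℝ) := by
      have hc : T.card = l0 x := by rw [l0, hTdef]
      rw [hc]; exact_mod_cast hx
    have h1 : ((T.card : ℝ)) ^ (1/(q/(q-1))) ≤ ke := by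
      rw [hinv, ← hked]
      exact Real.rpow_le_rpow (Nat.cast_nonneg _) hTk (by positivity)
    have h2 : (∑ i ∈ T, |h i| ^ q) ^ (1/q) ≤ L := by
      rw [← hLd, lq]
      refine Real.rpow_le_rpow (Finset.sum_nonneg fun i _ => Real.rpow_nonneg (abs_nonneg _) q)
        ?_ (by positivity)
      exact Finset.sum_le_sum_of_subset_of_nonneg (Finset.subset_univ T)
        (fun i _ _ => Real.rpow_nonneg (abs_nonneg _) q)
    calc a = ∑ i ∈ T, |h i| := had.symm
      _ ≤ (T.card : ℝ) ^ (1/(q/(q-1))) * (∑ i ∈ T, |h i| ^ q) ^ (1/q) := hholder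
      _ ≤ ke * L := by
          refine mul_le_mul h1 h2 (Real.rpow_nonneg ?_ _) hke
          exact Finset.sum_nonneg fun i _ => Real.rpow_nonneg (abs_nonneg _) q
  -- Step 3: cone condition
  have key3 : (1-κ) * (a + b) ≤ 2 * a := by
    nlinarith [key1, hS0, hlam]
  -- Step 4: sparsity bound
  have key5 : sparsityQ q h ≤ (2/(1-κ)) ^ (q/(q-1)) * (k : ℝ) := by
    rw [sparsityQ, hLd]
    have hstep : (1-κ) * l1 h ≤ 2 * (ke * L) := by
      rw [hab]; linarith [key2, key3]
    have hratio : l1 h / L ≤ (2/(1-κ)) * ke := by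
      rw [div_le_iff₀ hL]
      calc l1 h = ((1-κ) * l1 h) / (1-κ) := by field_simp
        _ ≤ (2 * (ke * L)) / (1-κ) := (div_le_div_iff_of_pos_right hκ1').mpr hstep
        _ = 2/(1-κ) * ke * L := by ring
    have hnn : 0 ≤ l1 h / L := div_nonneg (by rw [hab]; linarith) (le_of_lt hL)
    calc (l1 h / L) ^ (q/(q-1)) ≤ ((2/(1-κ)) * ke) ^ (q/(q-1)) :=
          Real.rpow_le_rpow hnn hratio (by positivity)
      _ = (2/(1-κ)) ^ (q/(q-1)) * ke ^ (q/(q-1)) :=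
          Real.mul_rpow (by positivity) hke
      _ = (2/(1-κ)) ^ (q/(q-1)) * (k : ℝ) := by
          have hkek : ke ^ (q/(q-1)) = (k:ℝ) := by
            rw [← hked, ← Real.rpow_mul (Nat.cast_nonneg k)]
            have hex : (1 - 1/q) * (q/(q-1)) = 1 := by field_simp
            rw [hex, Real.rpow_one]
          rw [hkek]
  have key6 : ρ ≤ l2 (A.mulVec h) / L := by
    rw [← hρd, ← hLd, cmsv]
    refine csInf_le ⟨0, fun r hr => ?_⟩ ⟨h, hzero, key5, rfl⟩
    obtain ⟨z, _, _, rfl⟩ := hr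
    exact div_nonneg (Real.sqrt_nonneg _) (lq_nonneg _ _)
  have key7 : (ρ * L)^2 ≤ S := by
    have h1 : ρ * L ≤ l2 (A.mulVec h) := (le_div_iff₀ hL).mp key6
    have h2 : (l2 (A.mulVec h))^2 = S := by
      rw [l2, Real.sq_sqrt (Finset.sum_nonneg fun i _ => sq_nonneg _), hSd]
    calc (ρ * L)^2 ≤ (l2 (A.mulVec h))^2 := by
          refine pow_le_pow_left₀ ?_ h1 2
          positivity
      _ = S := h2
  -- main estimate
  have main : ρ^2 * L ≤ 2 * lam * (1+κ) * ke := by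
    have t1 : lam * ((1+κ)*a) ≤ lam * ((1+κ)*(ke*L)) := by
      have ht : (1+κ)*a ≤ (1+κ)*(ke*L) :=
        mul_le_mul_of_nonneg_left key2 (by linarith)
      exact mul_le_mul_of_nonneg_left ht hlam.le
    have t2 : (0:ℝ) ≤ lam * ((1-κ)*b) :=
      mul_nonneg hlam.le (mul_nonneg hκ1'.le hb0)
    have h1 : (ρ*L)^2 ≤ 2 * lam * ((1+κ)*(ke*L)) := by
      linarith [key7, key1, t1, t2]
    nlinarith [h1, hL, hρ2]
  constructor
  · rw [div_mul_eq_mul_div, div_div]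
    rw [le_div_iff₀ (by positivity : (0:ℝ) < (1-κ) * ρ^2)]
    nlinarith [main, hL, hρ2, mul_le_mul_of_nonneg_left hκ1'.le
      (mul_nonneg (sq_nonneg ρ) hL.le), mul_nonneg (mul_nonneg (sq_nonneg ρ) hL.le) hκ0.le]
  · rw [div_mul_eq_mul_div, div_div]
    rw [le_div_iff₀ (by positivity : (0:ℝ) < (1-κ)^2 * ρ^2)]
    have step1 : (1-κ) * l1 h ≤ 2 * (ke * L) := by
      rw [hab]; nlinarith [key2, key3]
    nlinarith [mul_le_mul_of_nonneg_left step1 (by positivity : (0:ℝ) ≤ (1-κ) * ρ^2),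
      mul_le_mul_of_nonneg_left main (by positivity : (0:ℝ) ≤ 2 * (1-κ) * ke),
      mul_nonneg (mul_nonneg hκ1'.le hke) (mul_nonneg hρ2.le hL.le),
      mul_nonneg hκ0.le (mul_nonneg hke (mul_nonneg hlam.le hke))]
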